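/- arXiv:1705.07095 — 2 statements merged into one kernel-verified Lean document; each statement's English description precedes it below -/
import Mathlib

section
/- Let Θ be a finite possibilistic logic theory over a finite set of atoms such that for every interpretation ω, the set {(α,λ) ∈ Θ | ω ⊭ α} is nonempty (e.g. because (⊥, λ₁) ∈ Θ). If the formulas of Θ can be enumerated as (α₁,λ₁),…,(αₙ,λₙ) with λ₁ ≤ ⋯ ≤ λₙ, and M_i denotes the set of interpretations satisfying α_i ∧ ⋯ ∧ αₙ (with M_{n+1} the set of all interpretations), then Σ_ω π_Θ(ω) = Σ_{i=1}^{n} (1 − λ_i) · (|M_{i+1}| − |M_i|). In particular, π_Θ is a probability distribution on interpretations if and only if Σ_{i=1}^{n} (1 − λ_i)·(|M_{i+1}| − |M_i|) = 1. -/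
/-- Possibility distribution induced by the weighted formulas `(α i, λ i)`:
`π(ω) = min({1 − λ i | ω ⊭ α i} ∪ {1})`. -/
noncomputable def possDistIdx {A : Type} {n : ℕ}
    (α : Fin n → (A → Bool) → Bool) (lam : Fin n → ℝ) (ω : A → Bool) : ℝ :=
  (insert (1 : ℝ)
      ((Finset.univ.filter (fun i => ¬ α i ω = true)).image (fun i => 1 - lam i))).min'
    (Finset.insert_nonempty _ _)

/-- `M i`: the interpretations satisfying `α i ∧ ⋯ ∧ α n` (all interpretations for
`i = n+1`). -/
def cutModels {A : Type} [Fintype A] [DecidableEq A] {n : ℕ}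
    (α : Fin n → (A → Bool) → Bool) (i : Fin (n + 1)) : Finset (A → Bool) :=
  Finset.univ.filter (fun ω => ∀ j : Fin n, i.val ≤ j.val → α j ω = true)

/-- If every interpretation violates some formula and `λ₁ ≤ ⋯ ≤ λₙ`, then
`Σ_ω π(ω) = Σ_{i=1}^{n} (1 − λ_i)·(|M_{i+1}| − |M_i|)`; in particular `π` is a
probability distribution iff the right-hand side equals `1`. -/
theorem sum_possDist_eq {A : Type} [Fintype A] [DecidableEq A] {n : ℕ}
    (α : Fin n → (A → Bool) → Bool) (lam : Fin n → ℝ)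
    (hlam : ∀ i, lam i ∈ Set.Icc (0 : ℝ) 1)
    (hsorted : Monotone lam)
    (hviol : ∀ ω : A → Bool, ∃ i, ¬ α i ω = true) :
    (∑ ω : A → Bool, possDistIdx α lam ω)
        = ∑ i : Fin n, (1 - lam i) *
            (((cutModels α i.succ).card : ℝ) - ((cutModels α i.castSucc).card : ℝ))
      ∧ ((∑ ω : A → Bool, possDistIdx α lam ω) = 1 ↔
          ∑ i : Fin n, (1 - lam i) *
            (((cutModels α i.succ).card : ℝ) - ((cutModels α i.castSucc).card : ℝ)) = 1) := by
  have key : ∀ ω : A → Bool, possDistIdx α lam ω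
      = ∑ i : Fin n, (1 - lam i) *
          (if ω ∈ cutModels α i.succ ∧ ω ∉ cutModels α i.castSucc then (1:ℝ) else 0) := by
    intro ω
    have hne : (Finset.univ.filter (fun i : Fin n => ¬ α i ω = true)).Nonempty := by
      obtain ⟨i, hi⟩ := hviol ω
      exact ⟨i, Finset.mem_filter.mpr ⟨Finset.mem_univ _, hi⟩⟩
    set S := Finset.univ.filter (fun i : Fin n => ¬ α i ω = true) with hS
    set i₀ := S.max' hne with hi0
    have hi0mem : i₀ ∈ S := S.max'_mem hne
    have hi0viol : ¬ α i₀ ω = true := (Finset.mem_filter.mp hi0mem).2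
    have hmax : ∀ j ∈ S, j ≤ i₀ := fun j hj => S.le_max' j hj
    have hpd : possDistIdx α lam ω = 1 - lam i₀ := by
      apply le_antisymm
      · apply Finset.min'_le
        exact Finset.mem_insert_of_mem (Finset.mem_image.mpr ⟨i₀, hi0mem, rfl⟩)
      · apply Finset.le_min'
        intro y hy
        rcases Finset.mem_insert.mp hy with h | h
        · subst h; linarith [(hlam i₀).1]
        · obtain ⟨j, hj, rfl⟩ := Finset.mem_image.mp h
          have hle : lam j ≤ lam i₀ := hsorted (hmax j hj)
          linarith
    have huniq : ∀ i : Fin n,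
        (ω ∈ cutModels α i.succ ∧ ω ∉ cutModels α i.castSucc) ↔ i = i₀ := by
      intro i
      constructor
      · rintro ⟨h1, h2⟩
        simp only [cutModels, Finset.mem_filter, Finset.mem_univ, true_and] at h1 h2
        push_neg at h2
        obtain ⟨j, hji, hjv⟩ := h2
        have hjS : j ∈ S := Finset.mem_filter.mpr ⟨Finset.mem_univ _, hjv⟩
        have h1' : i₀.val ≤ i.val := by
          by_contra hc
          push_neg at hc
          have : i.succ.val ≤ i₀.val := by
            simpa [Fin.val_succ] using hc
          exact hi0viol (h1 i₀ this)
        have h2' : i.val ≤ i₀.val := le_trans (by simpa [Fin.coe_castSucc] using hji)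
          (hmax j hjS)
        exact Fin.ext (le_antisymm h2' h1')
      · rintro rfl
        constructor
        · simp only [cutModels, Finset.mem_filter, Finset.mem_univ, true_and]
          intro j hj
          by_contra hv
          have : j ∈ S := Finset.mem_filter.mpr ⟨Finset.mem_univ _, hv⟩
          have hle : j.val ≤ i₀.val := hmax j this
          simp only [Fin.val_succ] at hj
          omega
        · simp only [cutModels, Finset.mem_filter, Finset.mem_univ, true_and]
          push_neg
          exact ⟨i₀, le_refl _, hi0viol⟩
    rw [hpd]
    have : ∀ i : Fin n, (1 - lam i) *
        (if ω ∈ cutModels α i.succ ∧ ω ∉ cutModels α i.castSucc then (1:ℝ) else 0)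
        = if i = i₀ then 1 - lam i else 0 := by
      intro i
      rw [if_congr (huniq i) rfl rfl]
      by_cases h : i = i₀ <;> simp [h]
    rw [Finset.sum_congr rfl (fun i _ => this i), Finset.sum_ite_eq' Finset.univ i₀]
    simp
  have hsubset : ∀ i : Fin n, cutModels α i.castSucc ⊆ cutModels α i.succ := by
    intro i ω hω
    simp only [cutModels, Finset.mem_filter, Finset.mem_univ, true_and] at hω ⊢
    intro j hj
    apply hω j
    simp only [Fin.coe_castSucc]
    simp only [Fin.val_succ] at hj
    omega
  have main : (∑ ω : A → Bool, possDistIdx α lam ω)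
      = ∑ i : Fin n, (1 - lam i) *
          (((cutModels α i.succ).card : ℝ) - ((cutModels α i.castSucc).card : ℝ)) := by
    rw [Finset.sum_congr rfl (fun ω _ => key ω), Finset.sum_comm]
    refine Finset.sum_congr rfl (fun i _ => ?_)
    rw [← Finset.mul_sum]
    congr 1
    have hfe : (Finset.univ.filter
        (fun ω => ω ∈ cutModels α i.succ ∧ ω ∉ cutModels α i.castSucc))
        = cutModels α i.succ \ cutModels α i.castSucc := by
      ext ω
      simp [Finset.mem_sdiff]
    rw [Finset.sum_boole, hfe, Finset.card_sdiff_of_subset (hsubset i)]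
    have hc := Finset.card_le_card (hsubset i)
    push_cast [Nat.cast_sub hc]
    ring
  exact ⟨main, by rw [main]⟩
end

section
/- Let Θ = {(α₁,λ₁),…,(αₙ,λₙ)} with λ₁ ≤ ⋯ ≤ λₙ, α₁ = ⊥, over a finite set of atoms, and let 𝓔 be a finite multiset of interpretations. For 1 ≤ i ≤ n let 𝓔_i = {ω ∈ 𝓔 | ω ⊨ α_i ∧ ⋯ ∧ αₙ} and 𝓔_{n+1} = 𝓔. Then ∏_{ω ∈ 𝓔} π_Θ(ω) = ∏_{i=1}^{n} (1 − λ_i)^{|𝓔_{i+1}| − |𝓔_i|}. -/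
/-- `𝓔_i`: the sub-multiset of examples satisfying `α i ∧ ⋯ ∧ α n`
(all of `𝓔` for `i = n+1`). -/
def exCut {A : Type} {n : ℕ} (α : Fin n → (A → Bool) → Bool)
    (𝓔 : Multiset (A → Bool)) (i : Fin (n + 1)) : Multiset (A → Bool) :=
  𝓔.filter (fun ω => ∀ j : Fin n, i.val ≤ j.val → α j ω = true)

/-- With `λ₁ ≤ ⋯ ≤ λₙ` and `α₁ = ⊥`, the likelihood of a multiset `𝓔` of
interpretations factorizes: `∏_{ω ∈ 𝓔} π(ω) = ∏_i (1 − λ_i)^{|𝓔_{i+1}| − |𝓔_i|}`. -/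
theorem likelihood_factorization {A : Type} [Fintype A] {n : ℕ} (hn : 0 < n)
    (α : Fin n → (A → Bool) → Bool) (lam : Fin n → ℝ)
    (hlam : ∀ i, lam i ∈ Set.Icc (0 : ℝ) 1)
    (hsorted : Monotone lam)
    (hbot : α ⟨0, hn⟩ = fun _ => false)
    (𝓔 : Multiset (A → Bool)) :
    (𝓔.map (possDistIdx α lam)).prod
      = ∏ i : Fin n,
          (1 - lam i) ^ ((exCut α 𝓔 i.succ).card - (exCut α 𝓔 i.castSucc).card) := by
  induction 𝓔 using Multiset.induction with
  | empty => simp [exCut]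
  | cons ω 𝓔 ih =>
      -- the set of violated indices
      set S : Finset (Fin n) := Finset.univ.filter (fun i => ¬ α i ω = true) with hSdef
      have h0S : (⟨0, hn⟩ : Fin n) ∈ S := by
        simp [hSdef, hbot]
      have hS : S.Nonempty := ⟨_, h0S⟩
      set m : Fin n := S.max' hS with hmdef
      have hm_mem : ¬ α m ω = true := by
        exact (Finset.mem_filter.mp (S.max'_mem hS)).2
      have hm_max : ∀ i : Fin n, ¬ α i ω = true → i ≤ m := by
        intro i hi
        exact S.le_max' i (by simp [hSdef, hi])
      -- value of the possibility distribution at ω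
      have hπ : possDistIdx α lam ω = 1 - lam m := by
        unfold possDistIdx
        apply le_antisymm
        · apply Finset.min'_le
          refine Finset.mem_insert_of_mem ?_
          exact Finset.mem_image.mpr ⟨m, by simp [hSdef] at *; exact hm_mem, rfl⟩
        · apply Finset.le_min'
          intro y hy
          rcases Finset.mem_insert.mp hy with hy | hy
          · subst hy
            have := (hlam m).1
            linarith
          · rcases Finset.mem_image.mp hy with ⟨i, hi, rfl⟩
            have hi' : ¬ α i ω = true := by simpa [hSdef] using hi
            have : lam i ≤ lam m := hsorted (hm_max i hi')
            linarith
      -- the "cut" condition for ω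
      have hC_cons : ∀ i : Fin (n+1),
          (exCut α (ω ::ₘ 𝓔) i).card
            = (if ∀ j : Fin n, i.val ≤ j.val → α j ω = true then 1 else 0)
              + (exCut α 𝓔 i).card := by
        intro i
        unfold exCut
        rw [Multiset.filter_cons, Multiset.card_add]
        by_cases h : ∀ j : Fin n, i.val ≤ j.val → α j ω = true
        · rw [if_pos h, if_pos h]; simp
        · rw [if_neg h, if_neg h]; simp
      have hCm_succ : ∀ j : Fin n, (m.succ : Fin (n+1)).val ≤ j.val → α j ω = true := by
        intro j hj
        by_contra hja
        have := hm_max j hja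
        have h1 : j.val ≤ m.val := this
        have h2 : m.val + 1 ≤ j.val := by simpa using hj
        omega
      have hCm_cast : ¬ ∀ j : Fin n, (m.castSucc : Fin (n+1)).val ≤ j.val → α j ω = true := by
        intro h
        exact hm_mem (h m (by simp))
      have hC_ne : ∀ i : Fin n, i ≠ m →
          ((∀ j : Fin n, (i.succ : Fin (n+1)).val ≤ j.val → α j ω = true)
            ↔ (∀ j : Fin n, (i.castSucc : Fin (n+1)).val ≤ j.val → α j ω = true)) := by
        intro i hne
        constructor
        · intro h j hj
          by_contra hja
          -- j ≥ i is violated; from h, j < i+1, so j = i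
          have hj1 : i.val ≤ j.val := by simpa using hj
          have hj2 : ¬ ((i.succ : Fin (n+1)).val ≤ j.val) := by
            intro hle
            exact hja (h j hle)
          have hj3 : j.val ≤ i.val := by simp at hj2; omega
          have hji : j = i := Fin.ext (le_antisymm hj3 hj1)
          subst hji
          -- so i is violated, hence i ≤ m; also m ≤ i from h
          have him : j ≤ m := hm_max j hja
          have hmi : m.val ≤ j.val := by
            by_contra hlt
            push_neg at hlt
            have : (j.succ : Fin (n+1)).val ≤ m.val := by simp; omega
            exact hm_mem (h m this)
          exact hne (Fin.ext (le_antisymm him hmi))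
        · intro h j hj
          apply h j
          have : (i.castSucc : Fin (n+1)).val ≤ (i.succ : Fin (n+1)).val := by simp
          omega
      -- monotonicity of card of cuts
      have hc_mono : ∀ i : Fin n,
          (exCut α 𝓔 i.castSucc).card ≤ (exCut α 𝓔 i.succ).card := by
        intro i
        apply Multiset.card_le_card
        apply Multiset.monotone_filter_right
        intro x hx j hj
        apply hx j
        have : (i.castSucc : Fin (n+1)).val ≤ (i.succ : Fin (n+1)).val := by simp
        omega
      -- now compute
      rw [Multiset.map_cons, Multiset.prod_cons, ih, hπ]
      have hfactor : ∀ i : Fin n,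
          (1 - lam i) ^ ((exCut α (ω ::ₘ 𝓔) i.succ).card - (exCut α (ω ::ₘ 𝓔) i.castSucc).card)
            = (if i = m then (1 - lam i) else 1)
              * (1 - lam i) ^ ((exCut α 𝓔 i.succ).card - (exCut α 𝓔 i.castSucc).card) := by
        intro i
        rw [hC_cons, hC_cons]
        by_cases hi : i = m
        · rw [hi, if_pos hCm_succ, if_neg hCm_cast, if_pos rfl]
          have hle := hc_mono m
          have h2 : 1 + (exCut α 𝓔 m.succ).card - (0 + (exCut α 𝓔 m.castSucc).card)
              = ((exCut α 𝓔 m.succ).card - (exCut α 𝓔 m.castSucc).card) + 1 := by omega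
          rw [h2, pow_succ]
          ring
        · have hiff := hC_ne i hi
          rw [if_neg hi, one_mul]
          by_cases h1 : ∀ j : Fin n, (i.succ : Fin (n+1)).val ≤ j.val → α j ω = true
          · rw [if_pos h1, if_pos (hiff.mp h1)]
            congr 1
            omega
          · rw [if_neg h1, if_neg (fun h => h1 (hiff.mpr h))]
            congr 1
            omega
      calc (1 - lam m) * ∏ i : Fin n,
              (1 - lam i) ^ ((exCut α 𝓔 i.succ).card - (exCut α 𝓔 i.castSucc).card)
          = (∏ i : Fin n, (if i = m then (1 - lam i) else 1))
              * ∏ i : Fin n,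
                (1 - lam i) ^ ((exCut α 𝓔 i.succ).card - (exCut α 𝓔 i.castSucc).card) := by
            rw [Finset.prod_ite_eq' Finset.univ m (fun i => 1 - lam i)]
            simp
        _ = ∏ i : Fin n,
              (if i = m then (1 - lam i) else 1)
                * (1 - lam i) ^ ((exCut α 𝓔 i.succ).card - (exCut α 𝓔 i.castSucc).card) := by
            rw [Finset.prod_mul_distrib]
        _ = ∏ i : Fin n,
              (1 - lam i) ^ ((exCut α (ω ::ₘ 𝓔) i.succ).card - (exCut α (ω ::ₘ 𝓔) i.castSucc).card) := by
            exact Finset.prod_congr rfl (fun i _ => (hfactor i).symm)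
end
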